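/- Let R > 0, ν > 1, and let l₁, l₂ > 0 with l₁ + l₂ = πR; set α₂ := sin(l₂/(2R)) and h₊(x) := (1/ν)( −sin²[x/(2R)] + cos[x/(2R)]√(ν² − sin²[x/(2R)]) ). Then ∫₀^{l₁} ( h₊(σ + l₂) − h₊(σ + πR) ) dσ = 2H(1,ν) − 2H(α₂,ν), where H(α,ν) := R( (α/ν)√(ν² − α²) + ν arcsin(α/ν) ). -/

import Mathlib

open Real intervalIntegral

/-- `h₊(x) = (1/ν)(−sin²[x/(2R)] + cos[x/(2R)] √(ν² − sin²[x/(2R)]))`. -/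
noncomputable def hPlus (R ν x : ℝ) : ℝ :=
  (1 / ν) * (-(sin (x / (2 * R))) ^ 2
    + cos (x / (2 * R)) * Real.sqrt (ν ^ 2 - (sin (x / (2 * R))) ^ 2))

/-- `H(α,ν) = R((α/ν)√(ν² − α²) + ν arcsin(α/ν))`. -/
noncomputable def Hfun (R α ν : ℝ) : ℝ :=
  R * ((α / ν) * Real.sqrt (ν ^ 2 - α ^ 2) + ν * arcsin (α / ν))

/-- Antiderivative of `hPlus`. -/
noncomputable def Fprim (R ν x : ℝ) : ℝ :=
  -(x - R * sin (x / R)) / (2 * ν) + Hfun R (sin (x / (2 * R))) ν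

lemma hasDerivAt_Fprim (R ν : ℝ) (hR : 0 < R) (hν : 1 < ν) (x : ℝ) :
    HasDerivAt (fun y => Fprim R ν y) (hPlus R ν x) x := by
  have hR' : (2 : ℝ) * R ≠ 0 := by positivity
  have hν0 : (0 : ℝ) < ν := lt_trans one_pos hν
  set u := sin (x / (2 * R)) with hu
  have hu2 : u ^ 2 ≤ 1 := sin_sq_le_one _
  have hs2 : 0 < ν ^ 2 - u ^ 2 := by nlinarith
  have hs : 0 < Real.sqrt (ν ^ 2 - u ^ 2) := Real.sqrt_pos.2 hs2
  have hsq : Real.sqrt (ν ^ 2 - u ^ 2) ^ 2 = ν ^ 2 - u ^ 2 := Real.sq_sqrt hs2.le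
  -- derivative of inner sin
  have h1 : HasDerivAt (fun y : ℝ => sin (y / (2 * R))) (cos (x / (2 * R)) * (1 / (2 * R))) x :=
    ((hasDerivAt_id x).div_const (2 * R)).sin
  have h2 : HasDerivAt (fun y : ℝ => sin (y / R)) (cos (x / R) * (1 / R)) x :=
    ((hasDerivAt_id x).div_const R).sin
  -- part A : -(y - R sin(y/R))/(2ν)
  have hA : HasDerivAt (fun y : ℝ => -(y - R * sin (y / R)) / (2 * ν))
      (-(1 - R * (cos (x / R) * (1 / R))) / (2 * ν)) x :=
    (((hasDerivAt_id x).sub (h2.const_mul R)).neg).div_const (2 * ν)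
  -- sqrt part
  have hin : HasDerivAt (fun y : ℝ => ν ^ 2 - sin (y / (2 * R)) ^ 2)
      (0 - 2 * u ^ 1 * (cos (x / (2 * R)) * (1 / (2 * R)))) x :=
    (hasDerivAt_const x (ν ^ 2)).sub (h1.pow 2)
  have hsqrt : HasDerivAt (fun y : ℝ => Real.sqrt (ν ^ 2 - sin (y / (2 * R)) ^ 2))
      ((0 - 2 * u ^ 1 * (cos (x / (2 * R)) * (1 / (2 * R)))) /
        (2 * Real.sqrt (ν ^ 2 - u ^ 2))) x :=
    hin.sqrt (by exact hs2.ne')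
  -- arcsin part
  have huν : |u / ν| < 1 := by
    rw [abs_div, abs_of_pos hν0, div_lt_one hν0]
    have := abs_sin_le_one (x / (2 * R))
    linarith [hν, this]
  have harc : HasDerivAt (fun y : ℝ => arcsin (sin (y / (2 * R)) / ν))
      (1 / Real.sqrt (1 - (u / ν) ^ 2) * (cos (x / (2 * R)) * (1 / (2 * R)) / ν)) x := by
    have := (Real.hasDerivAt_arcsin (by intro h; rw [h] at huν; simp at huν)
      (by intro h; rw [h] at huν; simp at huν)).comp x (h1.div_const ν)
    rw [hu]; simpa [Function.comp_def] using this
  -- assemble Hfun part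
  have hB : HasDerivAt (fun y : ℝ => Hfun R (sin (y / (2 * R))) ν)
      (R * ((cos (x / (2 * R)) * (1 / (2 * R)) / ν * Real.sqrt (ν ^ 2 - u ^ 2)
          + u / ν * ((0 - 2 * u ^ 1 * (cos (x / (2 * R)) * (1 / (2 * R)))) /
            (2 * Real.sqrt (ν ^ 2 - u ^ 2))))
        + ν * (1 / Real.sqrt (1 - (u / ν) ^ 2) * (cos (x / (2 * R)) * (1 / (2 * R)) / ν)))) x := by
    unfold Hfun
    exact (((h1.div_const ν).mul hsqrt).add (harc.const_mul ν)).const_mul R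
  have key := hA.add hB
  refine key.congr_deriv ?_
  symm
  -- now prove the value equality
  have hcos : cos (x / R) = 1 - 2 * u ^ 2 := by
    have : x / R = 2 * (x / (2 * R)) := by field_simp
    rw [this, cos_two_mul]
    have := sin_sq_add_cos_sq (x / (2 * R))
    rw [hu]; nlinarith
  have hsub : Real.sqrt (1 - (u / ν) ^ 2) = Real.sqrt (ν ^ 2 - u ^ 2) / ν := by
    have h1 : (1 : ℝ) - (u / ν) ^ 2 = (ν ^ 2 - u ^ 2) / ν ^ 2 := by
      field_simp
    rw [h1, Real.sqrt_div hs2.le, Real.sqrt_sq hν0.le]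
  rw [hPlus]
  simp only [← hu]
  rw [hcos, hsub, one_div_div]
  set c := cos (x / (2 * R)) with hc
  set s := Real.sqrt (ν ^ 2 - u ^ 2) with hsdef
  have hs' : s ≠ 0 := hs.ne'
  field_simp
  linear_combination c * hsq

theorem integral_h_next_nearest_neighbor (R ν l₁ l₂ : ℝ) (hR : 0 < R) (hν : 1 < ν)
    (hl₁ : 0 < l₁) (hl₂ : 0 < l₂) (hsum : l₁ + l₂ = π * R) :
    ∫ σ in (0 : ℝ)..l₁, (hPlus R ν (σ + l₂) - hPlus R ν (σ + π * R)) =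
      2 * Hfun R 1 ν - 2 * Hfun R (sin (l₂ / (2 * R))) ν := by
  have hν0 : (0 : ℝ) < ν := lt_trans one_pos hν
  have hR' : R ≠ 0 := hR.ne'
  -- the integrand is the derivative of G σ = F(σ+l₂) − F(σ+πR)
  have hG : ∀ σ ∈ Set.uIcc (0 : ℝ) l₁,
      HasDerivAt (fun s => Fprim R ν (s + l₂) - Fprim R ν (s + π * R))
        (hPlus R ν (σ + l₂) - hPlus R ν (σ + π * R)) σ := by
    intro σ _
    have h1 := (hasDerivAt_Fprim R ν hR hν (σ + l₂)).comp σ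
      ((hasDerivAt_id σ).add_const l₂)
    have h2 := (hasDerivAt_Fprim R ν hR hν (σ + π * R)).comp σ
      ((hasDerivAt_id σ).add_const (π * R))
    simpa [Function.comp_def, Pi.sub_def] using h1.sub h2
  have hcont : Continuous (fun σ => hPlus R ν (σ + l₂) - hPlus R ν (σ + π * R)) := by
    have : Continuous (fun x : ℝ => hPlus R ν x) := by
      unfold hPlus
      fun_prop
    exact (this.comp (continuous_id.add continuous_const)).sub
      (this.comp (continuous_id.add continuous_const))
  rw [intervalIntegral.integral_eq_sub_of_hasDerivAt hG (hcont.intervalIntegrable 0 l₁)]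
  -- evaluate
  have hl1 : l₁ = π * R - l₂ := by linarith
  have k1 : sin ((l₁ + l₂) / (2 * R)) = 1 := by
    rw [hsum, show π * R / (2 * R) = π / 2 by field_simp, sin_pi_div_two]
  have k2 : sin ((l₁ + l₂) / R) = 0 := by
    rw [hsum, show π * R / R = π by field_simp, sin_pi]
  have k3 : sin ((l₁ + π * R) / (2 * R)) = sin (l₂ / (2 * R)) := by
    rw [show (l₁ + π * R) / (2 * R) = π - l₂ / (2 * R) by rw [hl1]; field_simp; ring,
      sin_pi_sub]
  have k4 : sin ((l₁ + π * R) / R) = -sin (l₂ / R) := by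
    rw [show (l₁ + π * R) / R = -(l₂ / R) + 2 * π by rw [hl1]; field_simp; ring,
      sin_add_two_pi, sin_neg]
  have k5 : sin ((π * R) / (2 * R)) = 1 := by
    rw [show (π * R) / (2 * R) = π / 2 by field_simp, sin_pi_div_two]
  have k6 : sin ((π * R) / R) = 0 := by
    rw [show (π * R) / R = π by field_simp, sin_pi]
  simp only [Fprim, zero_add, k1, k2, k3, k4, k5, k6]
  rw [hl1]
  field_simp
  ring
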